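/- Let m ≥ 2, let s_1,…,s_m be nonnegative integers with total t = s_1+⋯+s_m, and let l_j, u_j be integers with 0 ≤ l_j ≤ u_j ≤ s_j and l_j + u_j = s_j for each j (symmetric core constraints). Fix an index j and for a nonnegative integer r let N_{−j}(r) = ∑ ∏_{k≠j} C(s_k, x_k), the sum over all x ∈ ℕ^{m−1} with ∑_{k≠j} x_k = r and l_k ≤ x_k ≤ u_k for all k ≠ j. Suppose 2n ≥ t, n < t, l_j ≥ 1, u_j ≤ n, and n − u_j ≤ t − s_j. Then C(s_j, u_j)·N_{−j}(n − u_j)·(s_j − u_j) ≥ C(s_j, l_j − 1)·N_{−j}(n − l_j + 1)·(s_j − l_j + 1); equivalently, in the urn experiment with one additional draw of color C after n draws, P_n[X_j = u_j, X_{−j} ∈ B_{−j}, C = j] ≥ P_n[X_j = l_j − 1, X_{−j} ∈ B_{−j}, C = j]. -/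

import Mathlib

open Polynomial Finset

/-- coefficients of a ℕ-polynomial, extended to ℤ indices by 0. -/
def coz (p : Polynomial ℕ) : ℤ → ℕ := fun z => if 0 ≤ z then p.coeff z.toNat else 0

/-- symmetric (about `T/2`) unimodal function supported on `[0,T]`. -/
structure SUfun (T : ℤ) (g : ℤ → ℕ) : Prop where
  zero : ∀ r : ℤ, r < 0 → g r = 0
  symm : ∀ r : ℤ, g (T - r) = g r
  step : ∀ r : ℤ, 2 * r ≤ T → g (r - 1) ≤ g r

lemma SUfun.mono {T : ℤ} {g : ℤ → ℕ} (h : SUfun T g) :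
    ∀ (k : ℕ) (q : ℤ), 2 * q ≤ T → g (q - k) ≤ g q := by
  intro k
  induction k with
  | zero => intro q _; simp
  | succ k ih =>
    intro q hq
    have h1 : g (q - 1 - k) ≤ g (q - 1) := ih (q - 1) (by omega)
    have h2 : g (q - 1) ≤ g q := h.step q hq
    have e : q - ((k + 1 : ℕ) : ℤ) = q - 1 - k := by push_cast; ring
    rw [e]; exact h1.trans h2

lemma SUfun.le {T : ℤ} {g : ℤ → ℕ} (h : SUfun T g) {p q : ℤ}
    (hqp : q ≤ p) (hpq : p + q ≤ T) : g q ≤ g p := by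
  rcases lt_or_ge q 0 with hq | hq
  · rw [h.zero q hq]; exact Nat.zero_le _
  rcases le_or_gt (2 * p) T with hp | hp
  · have := h.mono (p - q).toNat p hp
    rwa [show p - ((p - q).toNat : ℤ) = q by omega] at this
  · have h2 : 2 * (T - p) ≤ T := by omega
    have := h.mono ((T - p) - q).toNat (T - p) h2
    rw [show (T - p) - (((T - p) - q).toNat : ℤ) = q by omega] at this
    exact this.trans (le_of_eq (h.symm p))

/-- convolution, where `a` is supported in `[0, F]`. -/
noncomputable def conv (F : ℤ) (a b : ℤ → ℕ) : ℤ → ℕ := fun r => ∑ i ∈ Finset.Icc (0:ℤ) F, a i * b (r - i)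

lemma conv_SU {F G : ℤ} (hF : 0 ≤ F) (hG : 0 ≤ G) {a b : ℤ → ℕ}
    (ha : SUfun F a) (hb : SUfun G b) : SUfun (F + G) (conv F a b) := by
  constructor
  · intro r hr
    refine Finset.sum_eq_zero fun i hi => ?_
    rw [Finset.mem_Icc] at hi
    rw [hb.zero (r - i) (by omega), mul_zero]
  · intro r
    show ∑ i ∈ Finset.Icc (0:ℤ) F, a i * b (F + G - r - i) = ∑ i ∈ Finset.Icc (0:ℤ) F, a i * b (r - i)
    refine Finset.sum_nbij' (fun i => F - i) (fun i => F - i) ?_ ?_ ?_ ?_ ?_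
    · intro i hi; rw [Finset.mem_Icc] at hi; simp only [Finset.mem_Icc]; omega
    · intro i hi; rw [Finset.mem_Icc] at hi; simp only [Finset.mem_Icc]; omega
    · intro i _; show F - (F - i) = i; ring
    · intro i _; show F - (F - i) = i; ring
    · intro i _
      have e1 : a (F - i) = a i := ha.symm i
      have e2 : b (G - (F + G - r - i)) = b (F + G - r - i) := hb.symm _
      rw [show G - (F + G - r - i) = r - (F - i) by ring] at e2
      rw [← e2, e1]
  · intro r hr
    have hKF : 2 * r - G - 1 ≤ F - 1 := by omega
    set K : ℤ := 2 * r - G - 1 with hK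
    -- pass to ℤ
    rw [← Nat.cast_le (α := ℤ)]
    have expand : ∀ x : ℤ, ((conv F a b x : ℕ) : ℤ) = ∑ i ∈ Finset.Icc (0:ℤ) F, (a i : ℤ) * (b (x - i) : ℤ) := by
      intro x; rw [conv]; push_cast; rfl
    rw [expand, expand, ← sub_nonneg, ← Finset.sum_sub_distrib]
    set d : ℤ → ℤ := fun i => (b (r - i) : ℤ) - (b (r - 1 - i) : ℤ) with hd
    have hterm : ∀ i : ℤ, (a i : ℤ) * (b (r - i)) - (a i) * (b (r - 1 - i)) = (a i : ℤ) * d i := by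
      intro i; rw [hd]; ring
    have dflip : ∀ i : ℤ, d (K - i) = - d i := by
      intro i
      have e1 : b (G - (r - 1 - i)) = b (r - 1 - i) := hb.symm _
      rw [show G - (r - 1 - i) = r - (K - i) by omega] at e1
      have e2 : b (G - (r - i)) = b (r - i) := hb.symm _
      rw [show G - (r - i) = r - 1 - (K - i) by omega] at e2
      simp only [hd]; rw [← e1, ← e2]; ring
    have dpos : ∀ i : ℤ, K ≤ 2 * i → 0 ≤ d i := by
      intro i hi
      rcases le_or_gt (2 * (r - i)) G with hgood | hbad
      · have := hb.step (r - i) hgood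
        simp only [hd]
        rw [show r - 1 - i = r - i - 1 by ring]
        exact sub_nonneg.mpr (by exact_mod_cast this)
      · have heq : 2 * (r - i) = G + 1 := by omega
        have e1 : b (G - (r - 1 - i)) = b (r - 1 - i) := hb.symm _
        rw [show G - (r - 1 - i) = r - i by omega] at e1
        simp only [hd, ← e1]
        simp
    simp only [hterm]
    -- split into good and bad parts
    rw [← Finset.sum_filter_add_sum_filter_not (Finset.Icc (0:ℤ) F) (fun i => K ≤ 2 * i)]
    set Sg := (Finset.Icc (0:ℤ) F).filter (fun i => K ≤ 2 * i) with hSg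
    set Sb := (Finset.Icc (0:ℤ) F).filter (fun i => ¬ (K ≤ 2 * i)) with hSb
    have hbadsum : ∑ i ∈ Sb, (a i : ℤ) * d i = - ∑ j ∈ Sb.image (fun i => K - i), (a (K - j) : ℤ) * d j := by
      rw [Finset.sum_image (by intro x _ y _ hxy; have hxy' : K - x = K - y := hxy; omega)]
      rw [← Finset.sum_neg_distrib]
      refine Finset.sum_congr rfl fun i _ => ?_
      rw [show K - (K - i) = i by ring, dflip]
      ring
    have himg : Sb.image (fun i => K - i) ⊆ Sg := by
      intro j hj
      rw [Finset.mem_image] at hj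
      obtain ⟨i, hi, rfl⟩ := hj
      rw [hSb, Finset.mem_filter, Finset.mem_Icc] at hi
      rw [hSg, Finset.mem_filter, Finset.mem_Icc]
      omega
    have hstep1 : ∑ j ∈ Sb.image (fun i => K - i), (a (K - j) : ℤ) * d j
        ≤ ∑ j ∈ Sg, (a (K - j) : ℤ) * d j := by
      refine Finset.sum_le_sum_of_subset_of_nonneg himg fun j hj _ => ?_
      rw [hSg, Finset.mem_filter] at hj
      exact mul_nonneg (by positivity) (dpos j hj.2)
    have hstep2 : ∑ j ∈ Sg, (a (K - j) : ℤ) * d j ≤ ∑ j ∈ Sg, (a j : ℤ) * d j := by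
      refine Finset.sum_le_sum fun j hj => ?_
      rw [hSg, Finset.mem_filter, Finset.mem_Icc] at hj
      have hle : a (K - j) ≤ a j := ha.le (by omega) (by omega)
      exact mul_le_mul_of_nonneg_right (by exact_mod_cast hle) (dpos j (by omega))
    rw [hbadsum]
    linarith

lemma coz_def (p : Polynomial ℕ) (z : ℤ) : coz p z = if 0 ≤ z then p.coeff z.toNat else 0 := rfl

lemma coz_natCast (p : Polynomial ℕ) (k : ℕ) : coz p (k:ℤ) = p.coeff k := by
  simp [coz]

lemma coz_neg (p : Polynomial ℕ) {z : ℤ} (hz : z < 0) : coz p z = 0 := by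
  rw [coz_def, if_neg (by omega)]

lemma sum_Icc_int_eq_range {M : Type*} [AddCommMonoid M] (F : ℕ) (f : ℤ → M) :
    ∑ i ∈ Finset.Icc (0:ℤ) (F:ℤ), f i = ∑ k ∈ Finset.range (F+1), f (k:ℤ) := by
  refine Finset.sum_nbij' (fun i => i.toNat) (fun k => (k:ℤ)) ?_ ?_ ?_ ?_ ?_
  · intro i hi; rw [Finset.mem_Icc] at hi; simp only [Finset.mem_range]; omega
  · intro k hk; rw [Finset.mem_range] at hk; simp only [Finset.mem_Icc]; omega
  · intro i hi; rw [Finset.mem_Icc] at hi; exact Int.toNat_of_nonneg hi.1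
  · intro k _; simp
  · intro i hi; rw [Finset.mem_Icc] at hi
    exact congrArg f (Int.toNat_of_nonneg hi.1).symm

lemma coz_mul {p q : Polynomial ℕ} {F : ℕ} (hp : p.natDegree ≤ F) :
    coz (p * q) = conv (F:ℤ) (coz p) (coz q) := by
  funext r
  rcases lt_or_ge r 0 with hr | hr
  · rw [conv, coz_neg _ hr]
    symm
    refine Finset.sum_eq_zero fun i hi => ?_
    rw [Finset.mem_Icc] at hi
    rw [coz_neg q (by omega : r - i < 0), mul_zero]
  · obtain ⟨n, rfl⟩ : ∃ n : ℕ, r = (n:ℤ) := ⟨r.toNat, by omega⟩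
    have lhs : coz (p*q) (n:ℤ) = ∑ k ∈ Finset.range (n+1), p.coeff k * q.coeff (n - k) := by
      rw [coz_natCast, Polynomial.coeff_mul,
        Finset.Nat.sum_antidiagonal_eq_sum_range_succ_mk]
    have rhs : conv (F:ℤ) (coz p) (coz q) (n:ℤ)
        = ∑ k ∈ Finset.range (F+1), p.coeff k * coz q ((n:ℤ) - k) := by
      rw [conv, sum_Icc_int_eq_range]
      exact Finset.sum_congr rfl fun k _ => by rw [coz_natCast]
    rw [lhs, rhs]
    have e1 : ∑ k ∈ Finset.range (n+1), p.coeff k * q.coeff (n - k)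
        = ∑ k ∈ Finset.range (n+1), p.coeff k * coz q ((n:ℤ) - k) := by
      refine Finset.sum_congr rfl fun k hk => ?_
      rw [Finset.mem_range] at hk
      rw [show ((n:ℤ) - k) = ((n - k : ℕ) : ℤ) by omega, coz_natCast]
    have e2 : ∑ k ∈ Finset.range (n+1), p.coeff k * coz q ((n:ℤ) - k)
        = ∑ k ∈ Finset.range (max n F + 1), p.coeff k * coz q ((n:ℤ) - k) := by
      refine Finset.sum_subset (by intro k hk; simp only [Finset.mem_range] at *; omega) ?_
      intro k hk hk'
      simp only [Finset.mem_range] at hk hk'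
      rw [coz_neg _ (by omega), mul_zero]
    have e3 : ∑ k ∈ Finset.range (F+1), p.coeff k * coz q ((n:ℤ) - k)
        = ∑ k ∈ Finset.range (max n F + 1), p.coeff k * coz q ((n:ℤ) - k) := by
      refine Finset.sum_subset (by intro k hk; simp only [Finset.mem_range] at *; omega) ?_
      intro k hk hk'
      simp only [Finset.mem_range] at hk hk'
      rw [Polynomial.coeff_eq_zero_of_natDegree_lt (by omega : p.natDegree < k), zero_mul]
    rw [e1, e2, ← e3]

/-- the single-factor polynomial. -/
noncomputable def pfac (sk lk uk : ℕ) : Polynomial ℕ :=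
  ∑ x ∈ Finset.Icc lk uk, Polynomial.monomial x (sk.choose x)

lemma pfac_coeff (sk lk uk y : ℕ) :
    (pfac sk lk uk).coeff y = if lk ≤ y ∧ y ≤ uk then sk.choose y else 0 := by
  rw [pfac, Polynomial.finset_sum_coeff]
  simp only [Polynomial.coeff_monomial]
  rw [Finset.sum_ite_eq' (Finset.Icc lk uk) y (fun x => sk.choose x)]
  simp [Finset.mem_Icc]

lemma pfac_natDegree (sk lk uk : ℕ) : (pfac sk lk uk).natDegree ≤ uk :=
  Polynomial.natDegree_le_iff_coeff_eq_zero.mpr fun N hN => by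
    rw [pfac_coeff]; exact if_neg (by omega)

lemma pfac_SU {sk lk uk : ℕ} (hlu : lk ≤ uk) (hus : uk ≤ sk) (hsym : lk + uk = sk) :
    SUfun (sk:ℤ) (coz (pfac sk lk uk)) := by
  constructor
  · intro r hr; exact coz_neg _ hr
  · intro r
    rcases lt_or_ge r 0 with hr | hr
    · rw [coz_neg _ hr]
      obtain ⟨x, hx⟩ : ∃ x : ℕ, (sk:ℤ) - r = (x:ℤ) := ⟨((sk:ℤ) - r).toNat, by omega⟩
      rw [hx, coz_natCast, pfac_coeff]
      exact if_neg (by omega)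
    rcases le_or_gt r (sk:ℤ) with hr2 | hr2
    · obtain ⟨x, rfl⟩ : ∃ x : ℕ, r = (x:ℤ) := ⟨r.toNat, by omega⟩
      rw [coz_natCast, show ((sk:ℤ) - x) = ((sk - x : ℕ) : ℤ) by omega, coz_natCast,
        pfac_coeff, pfac_coeff]
      rcases le_or_gt lk x with h5 | h5
      · rcases le_or_gt x uk with h6 | h6
        · rw [if_pos (by omega : lk ≤ sk - x ∧ sk - x ≤ uk), if_pos ⟨h5, h6⟩]
          exact Nat.choose_symm (by omega)
        · rw [if_neg (by omega), if_neg (by omega)]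
      · rw [if_neg (by omega), if_neg (by omega)]
    · rw [coz_neg _ (by omega : (sk:ℤ) - r < 0)]
      obtain ⟨x, rfl⟩ : ∃ x : ℕ, r = (x:ℤ) := ⟨r.toNat, by omega⟩
      rw [coz_natCast, pfac_coeff]
      exact (if_neg (by omega : ¬(lk ≤ x ∧ x ≤ uk))).symm
  · intro r hr
    rcases le_or_gt r 0 with hr0 | hr0
    · rw [coz_neg _ (by omega)]
      exact Nat.zero_le _
    obtain ⟨x, rfl⟩ : ∃ x : ℕ, r = (x:ℤ) := ⟨r.toNat, by omega⟩
    have hx1 : 1 ≤ x := by omega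
    have hx2 : 2 * x ≤ sk := by omega
    rw [show ((x:ℤ) - 1) = ((x - 1 : ℕ) : ℤ) by omega, coz_natCast, coz_natCast,
      pfac_coeff, pfac_coeff]
    have hxu : x ≤ uk := by omega
    rcases le_or_gt lk x with h5 | h5
    · rcases le_or_gt lk (x-1) with h6 | h6
      · rw [if_pos (⟨h6, by omega⟩ : lk ≤ x - 1 ∧ x - 1 ≤ uk), if_pos ⟨h5, hxu⟩]
        have hhalf : (x - 1) < sk / 2 := by omega
        have h7 := Nat.choose_le_succ_of_lt_half_left hhalf
        rwa [show x - 1 + 1 = x by omega] at h7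
      · rw [if_neg (by omega : ¬(lk ≤ x - 1 ∧ x - 1 ≤ uk))]
        exact Nat.zero_le _
    · rw [if_neg (by omega : ¬(lk ≤ x - 1 ∧ x - 1 ≤ uk)),
        if_neg (by omega : ¬(lk ≤ x ∧ x ≤ uk))]

def SUP (T : ℕ) (p : Polynomial ℕ) : Prop := p.natDegree ≤ T ∧ SUfun (T:ℤ) (coz p)

lemma SUP.mul {F G : ℕ} {p q : Polynomial ℕ} (hp : SUP F p) (hq : SUP G q) :
    SUP (F + G) (p * q) := by
  refine ⟨Polynomial.natDegree_mul_le.trans (add_le_add hp.1 hq.1), ?_⟩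
  rw [coz_mul hp.1]
  have := conv_SU (F := (F:ℤ)) (G := (G:ℤ)) (by positivity) (by positivity) hp.2 hq.2
  rwa [show ((F + G : ℕ) : ℤ) = (F:ℤ) + (G:ℤ) by push_cast; ring]

lemma SUP_one : SUP 0 1 := by
  refine ⟨by simp, ?_⟩
  constructor
  · intro r hr; exact coz_neg _ hr
  · intro r
    rw [Nat.cast_zero]
    rcases lt_or_ge r 0 with h | h
    · rw [coz_neg _ h]
      rcases lt_or_ge ((0:ℤ) - r) 0 with h2 | h2
      · rw [coz_neg _ h2]
      · obtain ⟨x, hx⟩ : ∃ x : ℕ, (0:ℤ) - r = (x:ℤ) := ⟨((0:ℤ)-r).toNat, by omega⟩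
        rw [hx, coz_natCast, Polynomial.coeff_one]
        exact if_neg (by omega : ¬ x = 0)
    · obtain ⟨x, rfl⟩ : ∃ x : ℕ, r = (x:ℤ) := ⟨r.toNat, by omega⟩
      rcases Nat.eq_zero_or_pos x with rfl | hx
      · norm_num
      · rw [coz_neg 1 (by omega : (0:ℤ) - x < 0), coz_natCast, Polynomial.coeff_one]
        exact (if_neg (by omega : ¬ x = 0)).symm
  · intro r hr
    rw [Nat.cast_zero] at hr
    rw [coz_neg _ (by omega)]
    exact Nat.zero_le _

lemma SUP_prod {κ : Type*} {S : Finset κ} {T : κ → ℕ} {p : κ → Polynomial ℕ}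
    (h : ∀ k ∈ S, SUP (T k) (p k)) : SUP (∑ k ∈ S, T k) (∏ k ∈ S, p k) := by
  induction S using Finset.cons_induction with
  | empty => simpa using SUP_one
  | cons k S hk ih =>
    rw [Finset.sum_cons, Finset.prod_cons]
    exact (h k (Finset.mem_cons_self k S)).mul (ih fun a ha => h a (Finset.mem_cons.mpr (Or.inr ha)))

lemma prod_monomial {κ : Type*} (S : Finset κ) (e c : κ → ℕ) :
    ∏ k ∈ S, Polynomial.monomial (e k) (c k)
      = Polynomial.monomial (∑ k ∈ S, e k) (∏ k ∈ S, c k) := by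
  induction S using Finset.cons_induction with
  | empty => simp
  | cons k S hk ih =>
    rw [Finset.prod_cons, ih, Finset.sum_cons, Finset.prod_cons,
      Polynomial.monomial_mul_monomial]



/-- Non-negativity of each bracketed term in equation (4) of the paper:
in the urn experiment with one additional draw of color `C` after `n` draws,
`P_n[X_j = u_j, X_{-j} ∈ B_{-j}, C = j] ≥ P_n[X_j = l_j - 1, X_{-j} ∈ B_{-j}, C = j]`,
stated in cross-multiplied integer form. -/
theorem bracket_term_nonneg (m : ℕ) (hm : 2 ≤ m) (s l u : Fin m → ℕ)
    (hlu : ∀ j, l j ≤ u j) (hus : ∀ j, u j ≤ s j)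
    (hsym : ∀ j, l j + u j = s j)
    (t : ℕ) (ht : t = ∑ j, s j)
    (j : Fin m)
    (Nmj : ℕ → ℕ)
    (hNmj : ∀ r, Nmj r = ∑ x ∈ (Fintype.piFinset fun k : {k : Fin m // k ≠ j} =>
        Finset.Icc (l k.1) (u k.1)).filter (fun x => ∑ k, x k = r),
        ∏ k, (s k.1).choose (x k))
    (n : ℕ) (h1 : t ≤ 2 * n) (h1' : n < t)
    (h2 : 1 ≤ l j) (h3 : u j ≤ n) (h4 : n - u j ≤ t - s j) :
    (s j).choose (l j - 1) * Nmj (n - l j + 1) * (s j - l j + 1) ≤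
      (s j).choose (u j) * Nmj (n - u j) * (s j - u j) := by
  classical
  set P : Polynomial ℕ := ∏ k : {k : Fin m // k ≠ j}, pfac (s k.1) (l k.1) (u k.1) with hPdef
  set T' : ℕ := ∑ k : {k : Fin m // k ≠ j}, s k.1 with hT'def
  have hsu : SUP T' P :=
    SUP_prod fun k _ => ⟨(pfac_natDegree _ _ _).trans (hus k.1),
      pfac_SU (hlu k.1) (hus k.1) (hsym k.1)⟩
  have hP : ∀ r : ℕ, P.coeff r = Nmj r := by
    intro r
    rw [hNmj]
    have hPe : P = ∑ x ∈ Fintype.piFinset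
        (fun k : {k : Fin m // k ≠ j} => Finset.Icc (l k.1) (u k.1)),
        Polynomial.monomial (∑ k, x k) (∏ k, (s k.1).choose (x k)) := by
      rw [hPdef]
      simp only [pfac]
      rw [Finset.prod_univ_sum]
      exact Finset.sum_congr rfl fun x _ => prod_monomial _ _ _
    rw [hPe, Polynomial.finset_sum_coeff, Finset.sum_filter]
    refine Finset.sum_congr rfl fun x _ => ?_
    rw [Polynomial.coeff_monomial]
  have hts : t = s j + T' := by
    rw [ht, Fintype.sum_eq_add_sum_compl j s, hT'def]
    congr 1
    exact Finset.sum_subtype _ (fun x => by simp) s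
  have hsj := hsym j
  have hlj := hlu j
  have hlen : l j ≤ n := hlj.trans h3
  have e1 : Nmj (n - u j) = coz P ((n:ℤ) - u j) := by
    rw [← hP, show ((n:ℤ) - u j) = ((n - u j : ℕ):ℤ) by omega, coz_natCast]
  have e2 : Nmj (n - l j + 1) = coz P ((n:ℤ) - l j + 1) := by
    rw [← hP, show ((n:ℤ) - l j + 1) = ((n - l j + 1 : ℕ):ℤ) by omega, coz_natCast]
  have key : Nmj (n - l j + 1) ≤ Nmj (n - u j) := by
    rw [e1, e2]
    have hsym2 : coz P ((T':ℤ) - ((n:ℤ) - l j + 1)) = coz P ((n:ℤ) - l j + 1) :=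
      hsu.2.symm _
    rw [← hsym2]
    exact hsu.2.le (by omega) (by omega)
  have h5 : u j + 1 ≤ s j := by omega
  have cc1 : (s j).choose (l j - 1) = (s j).choose (u j + 1) := by
    rw [show l j - 1 = s j - (u j + 1) by omega, Nat.choose_symm h5]
  have h6 : s j - l j + 1 = u j + 1 := by omega
  calc (s j).choose (l j - 1) * Nmj (n - l j + 1) * (s j - l j + 1)
      = ((s j).choose (u j + 1) * (u j + 1)) * Nmj (n - l j + 1) := by rw [cc1, h6]; ring
    _ = ((s j).choose (u j) * (s j - u j)) * Nmj (n - l j + 1) := by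
        rw [Nat.choose_succ_right_eq]
    _ ≤ ((s j).choose (u j) * (s j - u j)) * Nmj (n - u j) :=
        Nat.mul_le_mul_left _ key
    _ = (s j).choose (u j) * Nmj (n - u j) * (s j - u j) := by ring
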